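/- arXiv:2408.08672 — 2 statements merged into one kernel-verified Lean document; each statement's English description precedes it below -/
import Mathlib

section
/- Fix λ_i ∈ [0,1) for each of n qubits. Let O be an n-qubit operator supported on a set of ℓ qubits. Then its Q1 norm satisfies ‖O‖_{Q1} ≤ 4^ℓ · ‖O‖_∞. Equivalently, since the dual-Wauli coefficients of O are c_α = Tr(Q_α O), one has ∑_α |Tr(Q_α O)| ≤ 4^ℓ · ‖O‖_∞. -/
namespace SSP

noncomputable section

open Matrix
open scoped ComplexOrder

/-- Computational basis labels for `n` qubits. -/
abbrev Idx (n : ℕ) := Fin n → Fin 2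

/-- Operators (matrices) on the Hilbert space of `n` qubits. -/
abbrev Op (n : ℕ) := Matrix (Idx n) (Idx n) ℂ

/-- Super-operators on `n` qubits. -/
abbrev SOp (n : ℕ) := Op n →ₗ[ℂ] Op n

/-- The operator norm (largest singular value) of a complex matrix. -/
noncomputable def opNorm {m : Type*} [Fintype m] [DecidableEq m]
    (M : Matrix m m ℂ) : ℝ :=
  ‖Matrix.toEuclideanCLM (𝕜 := ℂ) M‖

/-- A density matrix: positive semidefinite with unit trace. -/
def IsDensity {n : ℕ} (ρ : Op n) : Prop := ρ.PosSemidef ∧ ρ.trace = 1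

/-- An operator is supported on the set `S` of qubits if it has the form
`Ô_S ⊗ 1` on the remaining qubits. -/
def SupportedOn {n : ℕ} (S : Set (Fin n)) (M : Op n) : Prop :=
  (∀ x y : Idx n, (∃ i ∉ S, x i ≠ y i) → M x y = 0) ∧
  (∀ x y x' y' : Idx n,
      (∀ i ∈ S, x i = x' i) → (∀ i ∈ S, y i = y' i) →
      (∀ i ∉ S, x i = y i) → (∀ i ∉ S, x' i = y' i) → M x y = M x' y')

/-- The support of an operator: the smallest set of qubits supporting it
(the intersection of all supporting sets). -/
def suppOp {n : ℕ} (M : Op n) : Set (Fin n) :=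
  {i | ∀ S : Set (Fin n), SupportedOn S M → i ∈ S}

/-- `E` is a quantum channel (CPTP map) acting only on the qubits in `S`:
it has a Kraus representation whose Kraus operators are all supported on `S`. -/
def IsChannelOn {n : ℕ} (S : Set (Fin n)) (E : SOp n) : Prop :=
  ∃ (m : ℕ) (F : Fin m → Op n),
    (∀ j, SupportedOn S (F j)) ∧
    (∑ j, (F j)ᴴ * F j = 1) ∧
    (∀ ρ, E ρ = ∑ j, F j * ρ * (F j)ᴴ)

/-- A quantum channel on the whole system. -/
def IsChannel {n : ℕ} (E : SOp n) : Prop := IsChannelOn Set.univ E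

/-- `Estar` is the adjoint of `E` with respect to the Hilbert–Schmidt
inner product `⟨A,B⟩ = Tr(A†B)`. -/
def IsHSAdjoint {n : ℕ} (E Estar : SOp n) : Prop :=
  ∀ A B : Op n, ((Estar A)ᴴ * B).trace = (Aᴴ * (E B)).trace

/-- An ergodic channel: it has a unique fixed point among density matrices,
this fixed point is full rank (positive definite), and there is no other
eigenvalue of modulus one. -/
def IsErgodic {n : ℕ} (E : SOp n) : Prop :=
  (∃ σ : Op n, IsDensity σ ∧ σ.PosDef ∧ E σ = σ ∧
      ∀ ρ : Op n, IsDensity ρ → E ρ = ρ → ρ = σ) ∧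
  (∀ μ : ℂ, Module.End.HasEigenvalue (E : Module.End ℂ (Op n)) μ → μ = 1 ∨ ‖μ‖ < 1)

/-- The set of qubits (endpoints) of an edge. -/
def edgeQubits {n : ℕ} (e : Sym2 (Fin n)) : Set (Fin n) := {i | i ∈ e}

/-- Finset of endpoints of an edge. -/
def edgeFinset' {n : ℕ} (e : Sym2 (Fin n)) : Finset (Fin n) :=
  Finset.univ.filter (· ∈ e)

/-- A Hamiltonian is geometrically `k`-local w.r.t. the graph `G`: it is a sum
of Hermitian terms, each supported on a connected subset of `G` with at most
`k` vertices. -/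
def GeomLocal {n : ℕ} (G : SimpleGraph (Fin n)) (k : ℕ) (H : Op n) : Prop :=
  ∃ (m : ℕ) (h : Fin m → Op n) (S : Fin m → Set (Fin n)),
    H = ∑ j, h j ∧
    ∀ j, (h j).IsHermitian ∧ SupportedOn (S j) (h j) ∧
      (S j).ncard ≤ k ∧ (G.induce (S j)).Preconnected

/-- The ball of radius `k` around a set of vertices, in the graph metric. -/
def Ball {n : ℕ} (G : SimpleGraph (Fin n)) (X : Set (Fin n)) (k : ℕ) :
    Set (Fin n) :=
  {v | ∃ u ∈ X, ∃ w : G.Walk u v, w.length ≤ k}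

/- Pauli matrices and the Wauli bases. -/
def PX : Matrix (Fin 2) (Fin 2) ℂ := !![0, 1; 1, 0]
def PY : Matrix (Fin 2) (Fin 2) ℂ := !![0, -Complex.I; Complex.I, 0]
def PZ : Matrix (Fin 2) (Fin 2) ℂ := !![1, 0; 0, -1]

/-- `W = (1/2)(1 + λ Z)`. -/
noncomputable def Wmat (l : ℝ) : Matrix (Fin 2) (Fin 2) ℂ :=
  (2⁻¹ : ℂ) • (1 + (l : ℂ) • PZ)

/-- Single-qubit Wauli basis `{W, X/2, Y/2, Z/2}`. -/
noncomputable def wauli (l : ℝ) : Fin 4 → Matrix (Fin 2) (Fin 2) ℂ :=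
  ![Wmat l, (2⁻¹ : ℂ) • PX, (2⁻¹ : ℂ) • PY, (2⁻¹ : ℂ) • PZ]

/-- Single-qubit dual Wauli basis `{1, X, Y, Z - λ·1}`. -/
noncomputable def dualWauli (l : ℝ) : Fin 4 → Matrix (Fin 2) (Fin 2) ℂ :=
  ![1, PX, PY, PZ - (l : ℂ) • 1]

/-- The `n`-qubit Wauli basis element `Q_α` (tensor product of the `Q_{α_i}`). -/
noncomputable def Qmat {n : ℕ} (lam : Fin n → ℝ) (α : Fin n → Fin 4) : Op n :=
  Matrix.of fun x y => ∏ i, wauli (lam i) (α i) (x i) (y i)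

/-- The `n`-qubit dual Wauli basis element `Q̃_α`. -/
noncomputable def Qdual {n : ℕ} (lam : Fin n → ℝ) (α : Fin n → Fin 4) : Op n :=
  Matrix.of fun x y => ∏ i, dualWauli (lam i) (α i) (x i) (y i)

/-- The support of a Wauli string. -/
def suppStr {n : ℕ} (α : Fin n → Fin 4) : Finset (Fin n) :=
  Finset.univ.filter (fun i => α i ≠ 0)

/-- The coefficient `c_α = Tr(Q_α O)` of the expansion `O = ∑_α c_α Q̃_α`
in the dual Wauli basis. -/
noncomputable def QCoeff {n : ℕ} (lam : Fin n → ℝ) (O : Op n)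
    (α : Fin n → Fin 4) : ℂ :=
  (Qmat lam α * O).trace

/-- The `Q1` norm: the `ℓ¹` norm of the dual-Wauli coefficient vector. -/
noncomputable def Q1Norm {n : ℕ} (lam : Fin n → ℝ) (O : Op n) : ℝ :=
  ∑ α : Fin n → Fin 4, ‖QCoeff lam O α‖

/-- The subspace `S_k`: the span of the dual Wauli operators `Q̃_α` with
`|α| ≤ k`. -/
def Sk {n : ℕ} (lam : Fin n → ℝ) (k : ℕ) : Submodule ℂ (Op n) :=
  Submodule.span ℂ {Q | ∃ α : Fin n → Fin 4, (suppStr α).card ≤ k ∧ Q = Qdual lam α}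

/-- The trace norm `Tr √(O†O)` of a matrix. -/
noncomputable def traceNorm {m : Type*} [Fintype m] [DecidableEq m]
    (M : Matrix m m ℂ) : ℝ :=
  (((Matrix.posSemidef_conjTranspose_mul_self M).1.eigenvectorUnitary.1 *
      Matrix.diagonal (((↑) : ℝ → ℂ) ∘ Real.sqrt ∘ (Matrix.posSemidef_conjTranspose_mul_self M).1.eigenvalues) *
      (star (Matrix.posSemidef_conjTranspose_mul_self M).1.eigenvectorUnitary : Matrix m m ℂ)).trace).re



set_option synthInstance.maxHeartbeats 1000000 in
lemma entry_le_opNorm {m : Type*} [Fintype m] [DecidableEq m] (M : Matrix m m ℂ) (x y : m) :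
    ‖M x y‖ ≤ opNorm M := by
  classical
  set T := Matrix.toEuclideanCLM (𝕜 := ℂ) M with hT
  have h1 : (T (EuclideanSpace.single y 1)) x = M x y := by
    have : EuclideanSpace.single y (1:ℂ) = WithLp.toLp 2 (Pi.single y 1) := rfl
    rw [this, hT, Matrix.toEuclideanCLM_toLp]
    simp [Matrix.mulVec_single]
  have h2 : ‖M x y‖ = ‖(inner ℂ (EuclideanSpace.single x (1:ℂ)) (T (EuclideanSpace.single y 1)) : ℂ)‖ := by
    rw [EuclideanSpace.inner_single_left]
    simp [h1]
  rw [h2]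
  calc ‖(inner ℂ (EuclideanSpace.single x (1:ℂ)) (T (EuclideanSpace.single y 1)) : ℂ)‖
      ≤ ‖EuclideanSpace.single x (1:ℂ)‖ * ‖T (EuclideanSpace.single y (1:ℂ))‖ :=
        norm_inner_le_norm _ _
    _ ≤ ‖EuclideanSpace.single x (1:ℂ)‖ * (‖T‖ * ‖EuclideanSpace.single y (1:ℂ)‖) :=
        mul_le_mul_of_nonneg_left (T.le_opNorm _) (norm_nonneg _)
    _ = opNorm M := by simp [EuclideanSpace.norm_single, opNorm, hT]

lemma wauli_diag_zero (l : ℝ) (k : Fin 4) (hk0 : k ≠ 0) (hk3 : k ≠ 3) (z : Fin 2) :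
    wauli l k z z = 0 := by
  fin_cases k
  · exact absurd rfl hk0
  · fin_cases z <;> simp [wauli, PX]
  · fin_cases z <;> simp [wauli, PY]
  · exact absurd rfl hk3

lemma wauli_three_flip (l : ℝ) (z : Fin 2) :
    wauli l 3 (z + 1) (z + 1) = - wauli l 3 z z := by
  fin_cases z <;> simp [wauli, PZ, show ((0:Fin 2)+1) = 1 from rfl, show ((1:Fin 2)+1) = 0 from rfl]

lemma sum_abs_wauli (l : ℝ) (hl0 : 0 ≤ l) (hl1 : l ≤ 1) (k : Fin 4) :
    ∑ t : Fin 2 × Fin 2, ‖wauli l k t.1 t.2‖ = 1 := by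
  rw [Fintype.sum_prod_type]
  fin_cases k
  · simp [wauli, Wmat, PZ, Fin.sum_univ_two, Matrix.one_apply]
    rw [show ((2⁻¹ : ℂ) + 2⁻¹ * (l:ℂ)) = (((1+l)/2 : ℝ) : ℂ) by push_cast; ring,
        show ((2⁻¹ : ℂ) + -(2⁻¹ * (l:ℂ))) = (((1-l)/2 : ℝ) : ℂ) by push_cast; ring]
    rw [Complex.norm_of_nonneg (by linarith), Complex.norm_of_nonneg (by linarith)]
    ring
  · simp [wauli, PX, Fin.sum_univ_two]
    norm_num
  · simp [wauli, PY, Fin.sum_univ_two]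
    norm_num
  · simp [wauli, PZ, Fin.sum_univ_two]
    norm_num

lemma trace_Qmat_mul {n : ℕ} (lam : Fin n → ℝ) (α : Fin n → Fin 4) (O : Op n) :
    (Qmat lam α * O).trace = ∑ p : Idx n × Idx n,
      (∏ i, wauli (lam i) (α i) (p.1 i) (p.2 i)) * O p.2 p.1 := by
  rw [Matrix.trace, Fintype.sum_prod_type]
  simp only [Matrix.diag_apply, Matrix.mul_apply, Qmat, Matrix.of_apply]

lemma abs_QCoeff_le {n : ℕ} (lam : Fin n → ℝ) (hlam : ∀ i, 0 ≤ lam i ∧ lam i < 1)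
    (O : Op n) (α : Fin n → Fin 4) : ‖QCoeff lam O α‖ ≤ opNorm O := by
  rw [QCoeff, trace_Qmat_mul]
  calc ‖∑ p : Idx n × Idx n, (∏ i, wauli (lam i) (α i) (p.1 i) (p.2 i)) * O p.2 p.1‖
      ≤ ∑ p : Idx n × Idx n, ‖(∏ i, wauli (lam i) (α i) (p.1 i) (p.2 i)) * O p.2 p.1‖ :=
        norm_sum_le _ _
    _ ≤ ∑ p : Idx n × Idx n, (∏ i, ‖wauli (lam i) (α i) (p.1 i) (p.2 i)‖) * opNorm O := by
        apply Finset.sum_le_sum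
        intro p _
        rw [norm_mul, norm_prod]
        exact mul_le_mul_of_nonneg_left (entry_le_opNorm O _ _)
          (Finset.prod_nonneg fun i _ => norm_nonneg _)
    _ = (∑ p : Idx n × Idx n, ∏ i, ‖wauli (lam i) (α i) (p.1 i) (p.2 i)‖) * opNorm O := by
        rw [Finset.sum_mul]
    _ = 1 * opNorm O := by
        congr 1
        have := Fintype.sum_equiv (Equiv.arrowProdEquivProdArrow (Fin n) (fun _ => Fin 2) (fun _ => Fin 2))
          (fun q : Fin n → Fin 2 × Fin 2 => ∏ i, ‖wauli (lam i) (α i) (q i).1 (q i).2‖)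
          (fun p : Idx n × Idx n => ∏ i, ‖wauli (lam i) (α i) (p.1 i) (p.2 i)‖)
          (fun q => rfl)
        rw [← this]
        beta_reduce
        rw [← Fintype.prod_sum (fun (i : Fin n) (t : Fin 2 × Fin 2) => ‖wauli (lam i) (α i) t.1 t.2‖)]
        exact Finset.prod_eq_one fun i _ =>
          sum_abs_wauli (lam i) (hlam i).1 (le_of_lt (hlam i).2) (α i)
    _ = opNorm O := one_mul _

lemma QCoeff_eq_zero {n : ℕ} (lam : Fin n → ℝ) (O : Op n) (S : Set (Fin n))
    (hS : SupportedOn S O) (α : Fin n → Fin 4) (j : Fin n) (hj : j ∉ S) (hαj : α j ≠ 0) :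
    QCoeff lam O α = 0 := by
  rw [QCoeff, trace_Qmat_mul]
  set F : Idx n × Idx n → ℂ :=
    fun p => (∏ i, wauli (lam i) (α i) (p.1 i) (p.2 i)) * O p.2 p.1 with hF
  have flip_inv : ∀ z : Fin 2, z + 1 + 1 = z := by decide
  let σ : (Idx n × Idx n) ≃ (Idx n × Idx n) :=
    { toFun := fun p => (Function.update p.1 j (p.1 j + 1), Function.update p.2 j (p.2 j + 1))
      invFun := fun p => (Function.update p.1 j (p.1 j + 1), Function.update p.2 j (p.2 j + 1))
      left_inv := by
        rintro ⟨x, y⟩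
        simp only [Prod.mk.injEq]
        constructor <;>
        · ext i
          by_cases h : i = j
          · subst h; simp [flip_inv]
          · simp [Function.update_of_ne h]
      right_inv := by
        rintro ⟨x, y⟩
        simp only [Prod.mk.injEq]
        constructor <;>
        · ext i
          by_cases h : i = j
          · subst h; simp [flip_inv]
          · simp [Function.update_of_ne h] }
  have key : ∀ p, F (σ p) = - F p := by
    rintro ⟨x, y⟩
    have hxj' : Function.update x j (x j + 1) j = x j + 1 := Function.update_self _ _ _
    have hyj' : Function.update y j (y j + 1) j = y j + 1 := Function.update_self _ _ _
    by_cases hxy : x j = y j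
    · by_cases hα3 : α j = 3
      · by_cases hoff : ∀ i ∉ S, x i = y i
        · have hO : O (Function.update y j (y j + 1)) (Function.update x j (x j + 1)) = O y x := by
            refine (hS.2 y x (Function.update y j (y j + 1)) (Function.update x j (x j + 1))
              ?_ ?_ ?_ ?_).symm
            · intro i hi; rw [Function.update_of_ne (fun h => hj (by rw [← h]; exact hi))]
            · intro i hi; rw [Function.update_of_ne (fun h => hj (by rw [← h]; exact hi))]
            · intro i hi; exact (hoff i hi).symm
            · intro i hi
              by_cases h : i = j
              · subst h; rw [hxj', hyj', hxy]
              · rw [Function.update_of_ne h, Function.update_of_ne h]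
                exact (hoff i hi).symm
          have hprod : (∏ i, wauli (lam i) (α i)
                (Function.update x j (x j + 1) i) (Function.update y j (y j + 1) i))
              = - ∏ i, wauli (lam i) (α i) (x i) (y i) := by
            rw [← Finset.mul_prod_erase Finset.univ _ (Finset.mem_univ j),
                ← Finset.mul_prod_erase Finset.univ
                  (fun i => wauli (lam i) (α i) (x i) (y i)) (Finset.mem_univ j)]
            rw [hxj', hyj', hα3, hxy, wauli_three_flip]
            rw [neg_mul]
            congr 1
            congr 1
            refine Finset.prod_congr rfl fun i hi => ?_
            have h : i ≠ j := (Finset.mem_erase.mp hi).1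
            rw [Function.update_of_ne h, Function.update_of_ne h]
          simp only [hF, σ, Equiv.coe_fn_mk, hO, hprod, neg_mul]
        · push_neg at hoff
          obtain ⟨i, hiS, hixy⟩ := hoff
          have hij : i ≠ j := fun h => hixy (h ▸ hxy)
          have h1 : O y x = 0 := hS.1 y x ⟨i, hiS, fun h => hixy h.symm⟩
          have h2 : O (Function.update y j (y j + 1)) (Function.update x j (x j + 1)) = 0 := by
            refine hS.1 _ _ ⟨i, hiS, ?_⟩
            rw [Function.update_of_ne hij, Function.update_of_ne hij]
            exact fun h => hixy h.symm
          simp only [hF, σ, Equiv.coe_fn_mk, h1, h2, mul_zero, neg_zero]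
      · have h1 : wauli (lam j) (α j) (x j) (y j) = 0 := by
          rw [hxy]; exact wauli_diag_zero _ _ hαj hα3 _
        have h2 : wauli (lam j) (α j) (Function.update x j (x j + 1) j)
            (Function.update y j (y j + 1) j) = 0 := by
          rw [hxj', hyj', hxy]; exact wauli_diag_zero _ _ hαj hα3 _
        have p1 : (∏ i, wauli (lam i) (α i) (x i) (y i)) = 0 :=
          Finset.prod_eq_zero (Finset.mem_univ j) h1
        have p2 : (∏ i, wauli (lam i) (α i)
            (Function.update x j (x j + 1) i) (Function.update y j (y j + 1) i)) = 0 :=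
          Finset.prod_eq_zero (Finset.mem_univ j) h2
        simp only [hF, σ, Equiv.coe_fn_mk, p1, p2, zero_mul, neg_zero]
    · have h1 : O y x = 0 := hS.1 y x ⟨j, hj, fun h => hxy h.symm⟩
      have h2 : O (Function.update y j (y j + 1)) (Function.update x j (x j + 1)) = 0 := by
        refine hS.1 _ _ ⟨j, hj, ?_⟩
        rw [hxj', hyj']
        intro h
        apply hxy
        have h2 := congrArg (· + 1) h
        simp only [flip_inv] at h2
        exact h2.symm
      simp only [hF, σ, Equiv.coe_fn_mk, h1, h2, mul_zero, neg_zero]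
  have hsum : ∑ p : Idx n × Idx n, F p = - ∑ p : Idx n × Idx n, F p := by
    conv_lhs => rw [← Equiv.sum_comp σ F]
    simp only [key, Finset.sum_neg_distrib]
  have h0 : (2:ℂ) * ∑ p : Idx n × Idx n, F p = 0 := by
    rw [two_mul]
    nth_rewrite 2 [hsum]
    ring
  exact (mul_eq_zero.mp h0).resolve_left two_ne_zero


/-- for an operator supported on `ℓ` qubits,
`‖O‖_{Q1} ≤ 4^ℓ ‖O‖_∞`. -/
theorem Q1Norm_le_pow_mul_opNorm {n : ℕ} (lam : Fin n → ℝ)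
    (hlam : ∀ i, 0 ≤ lam i ∧ lam i < 1)
    (O : Op n) (S : Set (Fin n)) (l : ℕ)
    (hS : SupportedOn S O) (hcard : S.ncard = l) :
    Q1Norm lam O ≤ 4 ^ l * opNorm O := by
  classical
  have hO : 0 ≤ opNorm O := norm_nonneg _
  rw [Q1Norm]
  rw [← Finset.sum_filter_add_sum_filter_not Finset.univ
    (fun α : Fin n → Fin 4 => ∀ i ∉ S, α i = 0) (fun α => ‖QCoeff lam O α‖)]
  have h2 : ∑ α ∈ Finset.univ.filter (fun α : Fin n → Fin 4 => ¬ ∀ i ∉ S, α i = 0),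
      ‖QCoeff lam O α‖ = 0 := by
    apply Finset.sum_eq_zero
    intro α hα
    rw [Finset.mem_filter] at hα
    have := hα.2
    push_neg at this
    obtain ⟨j, hj, hαj⟩ := this
    rw [QCoeff_eq_zero lam O S hS α j hj hαj, norm_zero]
  rw [h2, add_zero]
  have hcard' : (Finset.univ.filter (fun α : Fin n → Fin 4 => ∀ i ∉ S, α i = 0)).card
      = 4 ^ l := by
    rw [← Fintype.card_subtype]
    have e : {α : Fin n → Fin 4 // ∀ i ∉ S, α i = 0} ≃ (S → Fin 4) :=
      { toFun := fun α i => α.1 i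
        invFun := fun f => ⟨fun i => if h : i ∈ S then f ⟨i, h⟩ else 0, fun i hi => dif_neg hi⟩
        left_inv := by
          rintro ⟨α, hα⟩
          ext i
          by_cases h : i ∈ S
          · simp [h]
          · simp [h, hα i h]
        right_inv := fun f => by ext i; simp [i.2] }
    rw [Fintype.card_congr e, Fintype.card_fun]
    have : Fintype.card S = S.ncard := by
      rw [← Nat.card_coe_set_eq, Nat.card_eq_fintype_card]
    simp [this, hcard]
  calc ∑ α ∈ Finset.univ.filter (fun α : Fin n → Fin 4 => ∀ i ∉ S, α i = 0),
        ‖QCoeff lam O α‖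
      ≤ ∑ _α ∈ Finset.univ.filter (fun α : Fin n → Fin 4 => ∀ i ∉ S, α i = 0), opNorm O :=
        Finset.sum_le_sum fun α _ => abs_QCoeff_le lam hlam O α
    _ = ((Finset.univ.filter (fun α : Fin n → Fin 4 => ∀ i ∉ S, α i = 0)).card : ℝ)
        * opNorm O := by rw [Finset.sum_const, nsmul_eq_mul]
    _ = 4 ^ l * opNorm O := by rw [hcard']; push_cast; ring


end

end SSP
end

section
/- Fix λ_i ∈ [0,1) for each of n qubits and let λ = max_i λ_i. Let E be a quantum channel acting only on a set of k qubits (within the n-qubit system), and let E* be its Hilbert–Schmidt adjoint. Then for any n-qubit operator O, ‖E*(O)‖_{Q1} ≤ 4^k (1+λ)^k · ‖O‖_{Q1} ≤ 2^{3k} · ‖O‖_{Q1}. -/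
namespace SSP

noncomputable section

open Matrix
open scoped ComplexOrder

open ComplexConjugate

lemma sqrt2_mul_self : (Real.sqrt 2 : ℂ) * (Real.sqrt 2 : ℂ) = 2 := by
  norm_cast; exact Real.mul_self_sqrt (by norm_num)

noncomputable def uW : Fin 4 → Matrix (Fin 2) (Fin 2) ℂ :=
  ![1, (Real.sqrt 2 : ℂ)⁻¹ • !![1, 1; 1, -1],
       (Real.sqrt 2 : ℂ)⁻¹ • !![1, 1; Complex.I, -Complex.I], 1]

noncomputable def dWr (l : ℝ) : Fin 4 → Fin 2 → ℝ :=
  ![![(1+l)/2, (1-l)/2], ![1/2, -(1/2)], ![1/2, -(1/2)], ![1/2, -(1/2)]]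

noncomputable def ddWr (l : ℝ) : Fin 4 → Fin 2 → ℝ :=
  ![![1,1], ![1,-1], ![1,-1], ![1-l, -1-l]]

lemma sqrt2_sq : ((Real.sqrt 2 : ℝ) : ℂ) ^ 2 = 2 := by
  rw [sq, sqrt2_mul_self]

lemma sqrt2_inv_sq : ((Real.sqrt 2 : ℝ) : ℂ)⁻¹ ^ 2 = 1/2 := by
  rw [inv_pow, sqrt2_sq]; norm_num

lemma sq_wauli (l : ℝ) (b : Fin 4) (s t : Fin 2) :
    wauli l b s t = ∑ p, uW b s p * ((dWr l b p : ℝ) : ℂ) * conj (uW b t p) := by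
  fin_cases b <;> fin_cases s <;> fin_cases t <;>
    simp [wauli, Wmat, PX, PY, PZ, uW, dWr, Fin.sum_univ_two, Matrix.one_apply,
      Matrix.smul_apply, vecHead, vecTail]
  all_goals ring_nf
  all_goals simp [sqrt2_inv_sq, sqrt2_sq]
  all_goals norm_num

lemma sq_dual (l : ℝ) (b : Fin 4) (s t : Fin 2) :
    dualWauli l b s t = ∑ p, uW b s p * ((ddWr l b p : ℝ) : ℂ) * conj (uW b t p) := by
  fin_cases b <;> fin_cases s <;> fin_cases t <;>
    simp [dualWauli, PX, PY, PZ, uW, ddWr, Fin.sum_univ_two, Matrix.one_apply,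
      Matrix.smul_apply, vecHead, vecTail]
  all_goals ring_nf
  all_goals simp [sqrt2_inv_sq, sqrt2_sq]
  all_goals norm_num
  all_goals ring_nf
  all_goals simp [Complex.ext_iff]

lemma sq_rows (b : Fin 4) (s t : Fin 2) :
    ∑ p, uW b s p * conj (uW b t p) = if s = t then 1 else 0 := by
  fin_cases b <;> fin_cases s <;> fin_cases t <;>
    simp [uW, Fin.sum_univ_two, Matrix.one_apply, Matrix.smul_apply, vecHead, vecTail]
  all_goals ring_nf
  all_goals simp [sqrt2_inv_sq, sqrt2_sq]
  all_goals norm_num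

lemma sq_cols (b : Fin 4) (p q : Fin 2) :
    ∑ s, conj (uW b s p) * uW b s q = if p = q then 1 else 0 := by
  fin_cases b <;> fin_cases p <;> fin_cases q <;>
    simp [uW, Fin.sum_univ_two, Matrix.one_apply, Matrix.smul_apply, vecHead, vecTail]
  all_goals ring_nf
  all_goals simp [sqrt2_inv_sq, sqrt2_sq]
  all_goals norm_num

lemma sq_dW_abs {l : ℝ} (h0 : 0 ≤ l) (h1 : l ≤ 1) (b : Fin 4) :
    ∑ p, |dWr l b p| = 1 := by
  fin_cases b <;> simp [dWr, Fin.sum_univ_two, vecHead, vecTail]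
  all_goals (try rw [abs_of_nonneg (show (0:ℝ) ≤ (1+l)/2 by linarith),
    abs_of_nonneg (show (0:ℝ) ≤ (1-l)/2 by linarith)])
  all_goals (try simp only [show |(2:ℝ)⁻¹| = 2⁻¹ from abs_of_nonneg (by norm_num)])
  all_goals (try simp only [show |(1:ℝ)/2| = 1/2 from abs_of_nonneg (by norm_num)])
  all_goals linarith

lemma sq_dd_abs {l : ℝ} (h0 : 0 ≤ l) (h1 : l ≤ 1) (b : Fin 4) :
    ∑ p, |dWr l b p| * |ddWr l b p| = 1 := by
  fin_cases b <;> simp [dWr, ddWr, Fin.sum_univ_two, vecHead, vecTail]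
  all_goals (try rw [abs_of_nonneg (show (0:ℝ) ≤ (1+l)/2 by linarith),
    abs_of_nonneg (show (0:ℝ) ≤ (1-l)/2 by linarith)])
  all_goals (try simp only [show |(2:ℝ)⁻¹| = 2⁻¹ from abs_of_nonneg (by norm_num)])
  all_goals (try simp only [show |(1:ℝ)/2| = 1/2 from abs_of_nonneg (by norm_num)])
  all_goals (try rw [abs_of_nonneg (show (0:ℝ) ≤ 1-l by linarith)])
  all_goals (try rw [show |(-1:ℝ)-l| = 1 + l from by rw [abs_of_nonpos (by linarith)]; ring])
  all_goals linarith

lemma sq_dd_le {l : ℝ} (h0 : 0 ≤ l) (h1 : l ≤ 1) (b : Fin 4) (p : Fin 2) :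
    |ddWr l b p| ≤ 1 + l := by
  fin_cases b <;> fin_cases p <;> simp [ddWr, vecHead, vecTail]
  all_goals (try rw [abs_of_nonneg (show (0:ℝ) ≤ 1-l by linarith)])
  all_goals (try rw [show |(-1:ℝ)-l| = 1 + l from by rw [abs_of_nonpos (by linarith)]; ring])
  all_goals linarith

lemma sq_cancelA (l : ℝ) {a b : Fin 4} (hab : a ≠ b) (s t : Fin 2) :
    wauli l a (s+1) (t+1) * dualWauli l b (t+1) (s+1) = -(wauli l a s t * dualWauli l b t s) := by
  fin_cases a <;> fin_cases b <;> (try exact absurd rfl hab) <;> fin_cases s <;> fin_cases t <;>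
    simp [wauli, dualWauli, Wmat, PX, PY, PZ, Fin.sum_univ_two, Matrix.one_apply,
      Matrix.smul_apply, vecHead, vecTail] <;> ring

lemma sq_cancelC {b : Fin 4} {x y : Fin 2} (hxy : x ≠ y) (s : Fin 2) :
    conj (uW b (s+1) y) * uW b (s+1) x = -(conj (uW b s y) * uW b s x) := by
  fin_cases b <;> fin_cases x <;> fin_cases y <;> (try exact absurd rfl hxy) <;> fin_cases s <;>
    simp [uW, Matrix.one_apply, Matrix.smul_apply, vecHead, vecTail]
  all_goals ring_nf
  all_goals simp [Complex.I_sq]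
  all_goals ring

lemma sq_complete (l : ℝ) (s t p q : Fin 2) :
    ∑ g : Fin 4, wauli l g s t * dualWauli l g p q = if t = p ∧ s = q then 1 else 0 := by
  fin_cases s <;> fin_cases t <;> fin_cases p <;> fin_cases q <;>
    simp [wauli, dualWauli, Wmat, PX, PY, PZ, Fin.sum_univ_four, Matrix.one_apply,
      Matrix.smul_apply, vecHead, vecTail]
  all_goals ring_nf
  all_goals simp [Complex.I_sq]
  all_goals ring_nf

-- n-qubit layer
variable {n : ℕ}

lemma prod_ite_delta {κ : Fin n → Type*} [∀ i, DecidableEq (κ i)] [∀ i, Fintype (κ i)]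
    (x y : ∀ i, κ i) :
    (∏ i, if x i = y i then (1:ℂ) else 0) = if x = y then 1 else 0 := by
  by_cases h : x = y
  · subst h; simp
  · rw [if_neg h]
    obtain ⟨i, hi⟩ : ∃ i, x i ≠ y i := by
      by_contra hc; push_neg at hc; exact h (funext hc)
    exact Finset.prod_eq_zero (Finset.mem_univ i) (if_neg hi)

noncomputable def Vstr (α : Fin n → Fin 4) (x : Idx n) : Idx n → ℂ :=
  fun z => ∏ i, uW (α i) (z i) (x i)

noncomputable def Kmat (α : Fin n → Fin 4) : Op n :=
  Matrix.of fun a x => Vstr α x a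

noncomputable def Dstr (lam : Fin n → ℝ) (α : Fin n → Fin 4) (x : Idx n) : ℝ :=
  ∏ i, dWr (lam i) (α i) (x i)

noncomputable def Ddstr (lam : Fin n → ℝ) (α : Fin n → Fin 4) (x : Idx n) : ℝ :=
  ∏ i, ddWr (lam i) (α i) (x i)

lemma nq_spec (lam : Fin n → ℝ) (α : Fin n → Fin 4) :
    Qmat lam α = Kmat α * (Matrix.diagonal fun x => ((Dstr lam α x : ℝ) : ℂ)) * (Kmat α)ᴴ := by
  ext a b
  rw [Matrix.mul_apply]
  simp only [Matrix.mul_diagonal, Matrix.conjTranspose_apply, Kmat, Matrix.of_apply]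
  calc Qmat lam α a b = ∏ i, ∑ p, uW (α i) (a i) p * ((dWr (lam i) (α i) p : ℝ) : ℂ)
        * conj (uW (α i) (b i) p) := by
        simp only [Qmat, Matrix.of_apply]
        exact Finset.prod_congr rfl fun i _ => sq_wauli _ _ _ _
    _ = ∑ x : Idx n, ∏ i, uW (α i) (a i) (x i) * ((dWr (lam i) (α i) (x i) : ℝ) : ℂ)
        * conj (uW (α i) (b i) (x i)) := by
        rw [← Fintype.piFinset_univ]
        exact Finset.prod_univ_sum _ _
    _ = ∑ x : Idx n, Vstr α x a * ((Dstr lam α x : ℝ) : ℂ) * conj (Vstr α x b) := by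
        refine Finset.sum_congr rfl fun x _ => ?_
        rw [Vstr, Vstr, Dstr]
        push_cast
        rw [map_prod]
        rw [← Finset.prod_mul_distrib, ← Finset.prod_mul_distrib]
    _ = ∑ x : Idx n, Vstr α x a * ((Dstr lam α x : ℝ) : ℂ) * (starRingEnd ℂ) (Vstr α x b) := rfl

lemma nq_spec' (lam : Fin n → ℝ) (α : Fin n → Fin 4) :
    Qdual lam α = Kmat α * (Matrix.diagonal fun x => ((Ddstr lam α x : ℝ) : ℂ)) * (Kmat α)ᴴ := by
  ext a b
  rw [Matrix.mul_apply]
  simp only [Matrix.mul_diagonal, Matrix.conjTranspose_apply, Kmat, Matrix.of_apply]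
  calc Qdual lam α a b = ∏ i, ∑ p, uW (α i) (a i) p * ((ddWr (lam i) (α i) p : ℝ) : ℂ)
        * conj (uW (α i) (b i) p) := by
        simp only [Qdual, Matrix.of_apply]
        exact Finset.prod_congr rfl fun i _ => sq_dual _ _ _ _
    _ = ∑ x : Idx n, ∏ i, uW (α i) (a i) (x i) * ((ddWr (lam i) (α i) (x i) : ℝ) : ℂ)
        * conj (uW (α i) (b i) (x i)) := by
        rw [← Fintype.piFinset_univ]
        exact Finset.prod_univ_sum _ _
    _ = ∑ x : Idx n, Vstr α x a * ((Ddstr lam α x : ℝ) : ℂ) * conj (Vstr α x b) := by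
        refine Finset.sum_congr rfl fun x _ => ?_
        rw [Vstr, Vstr, Ddstr]
        push_cast
        rw [map_prod]
        rw [← Finset.prod_mul_distrib, ← Finset.prod_mul_distrib]
    _ = _ := rfl

lemma nq_cols (α : Fin n → Fin 4) : (Kmat α)ᴴ * Kmat α = 1 := by
  ext x y
  rw [Matrix.mul_apply, Matrix.one_apply]
  simp only [Matrix.conjTranspose_apply, Kmat, Matrix.of_apply, Vstr]
  calc ∑ a : Idx n, conj (∏ i, uW (α i) (a i) (x i)) * ∏ i, uW (α i) (a i) (y i)
      = ∑ a : Idx n, ∏ i, conj (uW (α i) (a i) (x i)) * uW (α i) (a i) (y i) := by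
        refine Finset.sum_congr rfl fun a _ => ?_
        rw [map_prod, ← Finset.prod_mul_distrib]
    _ = ∏ i, ∑ s, conj (uW (α i) s (x i)) * uW (α i) s (y i) := by
        refine Eq.symm ?_
        rw [← Fintype.piFinset_univ]
        exact Finset.prod_univ_sum _ _
    _ = ∏ i, if x i = y i then (1:ℂ) else 0 := by
        exact Finset.prod_congr rfl fun i _ => sq_cols _ _ _
    _ = if x = y then 1 else 0 := prod_ite_delta x y

lemma nq_rows (α : Fin n → Fin 4) : Kmat α * (Kmat α)ᴴ = 1 := by
  ext x y
  rw [Matrix.mul_apply, Matrix.one_apply]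
  simp only [Matrix.conjTranspose_apply, Kmat, Matrix.of_apply, Vstr]
  calc ∑ a : Idx n, (∏ i, uW (α i) (x i) (a i)) * conj (∏ i, uW (α i) (y i) (a i))
      = ∑ a : Idx n, ∏ i, uW (α i) (x i) (a i) * conj (uW (α i) (y i) (a i)) := by
        refine Finset.sum_congr rfl fun a _ => ?_
        rw [map_prod, ← Finset.prod_mul_distrib]
    _ = ∏ i, ∑ s, uW (α i) (x i) s * conj (uW (α i) (y i) s) := by
        refine Eq.symm ?_
        rw [← Fintype.piFinset_univ]
        exact Finset.prod_univ_sum _ _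
    _ = ∏ i, if x i = y i then (1:ℂ) else 0 := by
        exact Finset.prod_congr rfl fun i _ => sq_rows _ _ _
    _ = if x = y then 1 else 0 := prod_ite_delta x y

lemma trace_mul_expand (A M : Op n) : (A * M).trace = ∑ a, ∑ b, A a b * M b a := by
  simp [Matrix.trace, Matrix.diag, Matrix.mul_apply]

lemma trace_diag_conj (u v : Idx n → ℝ) (A : Op n) :
    ((Matrix.diagonal fun x => ((u x : ℝ) : ℂ)) *
      (Aᴴ * ((Matrix.diagonal fun y => ((v y : ℝ) : ℂ)) * A))).trace
    = ∑ x, ∑ y, ((u x : ℝ) : ℂ) * ((v y : ℝ) : ℂ) * (conj (A y x) * A y x) := by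
  simp only [Matrix.trace, Matrix.diag]
  refine Finset.sum_congr rfl fun x _ => ?_
  rw [Matrix.diagonal_mul, Matrix.mul_apply, Finset.mul_sum]
  refine Finset.sum_congr rfl fun y _ => ?_
  rw [Matrix.conjTranspose_apply, Matrix.diagonal_mul, starRingEnd_apply]
  ring

-- Fin 2 flip
lemma fin2_add_one_add_one (x : Fin 2) : x + 1 + 1 = x := by fin_cases x <;> rfl

lemma fin2_add_one_ne (x : Fin 2) : x + 1 ≠ x := by fin_cases x <;> decide

def flip (i0 : Fin n) (x : Idx n) : Idx n := Function.update x i0 (x i0 + 1)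

lemma flip_self (i0 : Fin n) (x : Idx n) : flip i0 x i0 = x i0 + 1 := by
  simp [flip]

lemma flip_ne (i0 : Fin n) (x : Idx n) {i : Fin n} (h : i ≠ i0) : flip i0 x i = x i := by
  simp [flip, Function.update_of_ne h]

lemma flip_flip (i0 : Fin n) (x : Idx n) : flip i0 (flip i0 x) = x := by
  funext i
  by_cases h : i = i0
  · subst h; rw [flip_self, flip_self, fin2_add_one_add_one]
  · rw [flip_ne _ _ h, flip_ne _ _ h]

lemma prod_flip_split (i0 : Fin n) (g : (i : Fin n) → Fin 2 → Fin 2 → ℂ) (x y : Idx n) :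
    ∏ i, g i (flip i0 x i) (flip i0 y i)
      = g i0 (x i0 + 1) (y i0 + 1) * ∏ i ∈ Finset.univ.erase i0, g i (x i) (y i) := by
  rw [← Finset.mul_prod_erase Finset.univ _ (Finset.mem_univ i0), flip_self, flip_self]
  congr 1
  refine Finset.prod_congr rfl fun i hi => ?_
  rw [flip_ne _ _ (Finset.ne_of_mem_erase hi), flip_ne _ _ (Finset.ne_of_mem_erase hi)]

lemma prod_split (i0 : Fin n) (g : (i : Fin n) → Fin 2 → Fin 2 → ℂ) (x y : Idx n) :
    ∏ i, g i (x i) (y i)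
      = g i0 (x i0) (y i0) * ∏ i ∈ Finset.univ.erase i0, g i (x i) (y i) :=
  (Finset.mul_prod_erase Finset.univ _ (Finset.mem_univ i0)).symm

lemma prod_ite_one_zero (P : Fin n → Prop) [DecidablePred P] :
    (∏ i, if P i then (1:ℂ) else 0) = if ∀ i, P i then 1 else 0 := by
  by_cases h : ∀ i, P i
  · rw [if_pos h]; exact Finset.prod_eq_one fun i _ => if_pos (h i)
  · rw [if_neg h]
    push_neg at h
    obtain ⟨i, hi⟩ := h
    exact Finset.prod_eq_zero (Finset.mem_univ i) (if_neg hi)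

lemma QCoeff_expand (lam : Fin n → ℝ) (O : Op n) :
    O = ∑ β : Fin n → Fin 4, QCoeff lam O β • Qdual lam β := by
  ext a b
  have key : ∀ c d : Idx n,
      (∑ β : Fin n → Fin 4, Qmat lam β c d * Qdual lam β a b)
        = if d = a ∧ c = b then 1 else 0 := by
    intro c d
    have h1 : ∀ β : Fin n → Fin 4, Qmat lam β c d * Qdual lam β a b
        = ∏ i, (wauli (lam i) (β i) (c i) (d i) * dualWauli (lam i) (β i) (a i) (b i)) := by
      intro β
      simp only [Qmat, Qdual, Matrix.of_apply]
      rw [Finset.prod_mul_distrib]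
    rw [Finset.sum_congr rfl fun β _ => h1 β, ← Fintype.piFinset_univ]
    refine Eq.trans (Finset.prod_univ_sum (fun _ : Fin n => (Finset.univ : Finset (Fin 4)))
      (fun i g => wauli (lam i) g (c i) (d i) * dualWauli (lam i) g (a i) (b i))).symm ?_
    calc ∏ i, ∑ g : Fin 4, wauli (lam i) g (c i) (d i) * dualWauli (lam i) g (a i) (b i)
        = ∏ i, if d i = a i ∧ c i = b i then (1:ℂ) else 0 :=
          Finset.prod_congr rfl fun i _ => sq_complete _ _ _ _ _
      _ = if ∀ i, d i = a i ∧ c i = b i then 1 else 0 := prod_ite_one_zero _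
      _ = if d = a ∧ c = b then 1 else 0 := by
          refine if_congr ?_ rfl rfl
          rw [forall_and, funext_iff, funext_iff]
  have lhs : (∑ β : Fin n → Fin 4, QCoeff lam O β • Qdual lam β) a b
      = ∑ β : Fin n → Fin 4, (∑ c, ∑ d, Qmat lam β c d * O d c) * Qdual lam β a b := by
    simp only [Matrix.sum_apply, Matrix.smul_apply, QCoeff, smul_eq_mul]
    exact Finset.sum_congr rfl fun β _ => by rw [trace_mul_expand]
  rw [lhs]
  refine Eq.symm ?_
  calc ∑ β : Fin n → Fin 4, (∑ c, ∑ d, Qmat lam β c d * O d c) * Qdual lam β a b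
      = ∑ c, ∑ d, O d c * (∑ β : Fin n → Fin 4, Qmat lam β c d * Qdual lam β a b) := by
        simp only [Finset.sum_mul, Finset.mul_sum]
        rw [Finset.sum_comm]
        refine Finset.sum_congr rfl fun c _ => ?_
        rw [Finset.sum_comm]
        refine Finset.sum_congr rfl fun d _ => Finset.sum_congr rfl fun β _ => by ring
    _ = O a b := by
        have h3 : ∀ c d : Idx n, O d c * (if d = a ∧ c = b then (1:ℂ) else 0)
            = if c = b then (if d = a then O d c else 0) else 0 := by
          intro c d
          by_cases h1 : c = b <;> by_cases h2 : d = a <;> simp [h1, h2]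
        simp only [fun c d => congrArg (O d c * ·) (key c d)]
        simp only [h3]
        simp

lemma trace_conj_self (M : Op n) (h : (Mᴴ * M).trace = 0) : M = 0 := by
  have h1 : (Mᴴ * M).trace = ((∑ x, ∑ y, Complex.normSq (M y x) : ℝ) : ℂ) := by
    rw [trace_mul_expand]
    push_cast
    refine Finset.sum_congr rfl fun x _ => Finset.sum_congr rfl fun y _ => ?_
    rw [Matrix.conjTranspose_apply, mul_comm, ← starRingEnd_apply, Complex.mul_conj]
  rw [h1] at h
  norm_cast at h
  have hsum : ∑ x : Idx n, ∑ y : Idx n, Complex.normSq (M x y) = 0 := by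
    rw [Finset.sum_comm]; exact h
  have h2 : ∀ x ∈ (Finset.univ : Finset (Idx n)), (∑ y, Complex.normSq (M x y)) = 0 :=
    (Finset.sum_eq_zero_iff_of_nonneg (fun x _ =>
      Finset.sum_nonneg fun y _ => Complex.normSq_nonneg _)).mp hsum
  ext a b
  have h3 := (Finset.sum_eq_zero_iff_of_nonneg
    (fun y _ => Complex.normSq_nonneg (M a y))).mp (h2 a (Finset.mem_univ a)) b (Finset.mem_univ b)
  simpa using Complex.normSq_eq_zero.mp h3

set_option maxHeartbeats 1000000 in
lemma Estar_eq {E Es : SOp n} {m : ℕ} {F : Fin m → Op n}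
    (hKraus : ∀ ρ, E ρ = ∑ j, F j * ρ * (F j)ᴴ)
    (hadj : IsHSAdjoint E Es) (A : Op n) :
    Es A = ∑ j, (F j)ᴴ * A * F j := by
  have key : ∀ B, ((Es A - ∑ j, (F j)ᴴ * A * F j)ᴴ * B).trace = 0 := by
    intro B
    have h1 : ((Es A)ᴴ * B).trace = ((∑ j, (F j)ᴴ * A * F j)ᴴ * B).trace := by
      rw [hadj A B, hKraus B]
      rw [Matrix.conjTranspose_sum]
      simp only [Matrix.mul_sum, Matrix.sum_mul, Matrix.trace_sum]
      refine Finset.sum_congr rfl fun j _ => ?_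
      rw [Matrix.conjTranspose_mul, Matrix.conjTranspose_mul,
        Matrix.conjTranspose_conjTranspose]
      rw [Matrix.trace_mul_comm (Aᴴ) (F j * B * (F j)ᴴ)]
      rw [Matrix.mul_assoc (F j * B) ((F j)ᴴ) (Aᴴ)]
      rw [Matrix.trace_mul_comm (F j * B) ((F j)ᴴ * Aᴴ)]
      simp only [Matrix.mul_assoc]
    rw [Matrix.conjTranspose_sub, Matrix.sub_mul, Matrix.trace_sub, h1, sub_self]
  exact sub_eq_zero.mp (trace_conj_self _ (key (Es A - ∑ j, (F j)ᴴ * A * F j)))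

lemma prod_flip_left (i0 : Fin n) (h : (i : Fin n) → Fin 2 → ℂ) (x : Idx n) :
    ∏ i, h i (flip i0 x i) = h i0 (x i0 + 1) * ∏ i ∈ Finset.univ.erase i0, h i (x i) := by
  rw [← Finset.mul_prod_erase Finset.univ _ (Finset.mem_univ i0), flip_self]
  congr 1
  exact Finset.prod_congr rfl fun i hi => by rw [flip_ne _ _ (Finset.ne_of_mem_erase hi)]

lemma prod_left (i0 : Fin n) (h : (i : Fin n) → Fin 2 → ℂ) (x : Idx n) :
    ∏ i, h i (x i) = h i0 (x i0) * ∏ i ∈ Finset.univ.erase i0, h i (x i) :=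
  (Finset.mul_prod_erase Finset.univ _ (Finset.mem_univ i0)).symm

noncomputable def Nmat (F : Op n) (α β : Fin n → Fin 4) : Op n :=
  (Kmat β)ᴴ * (F * Kmat α)

lemma Nmat_apply (F : Op n) (α β : Fin n → Fin 4) (x y : Idx n) :
    Nmat F α β y x = ∑ c, ∑ d, conj (Vstr β y c) * (F c d * Vstr α x d) := by
  simp only [Nmat, Matrix.mul_apply, Matrix.conjTranspose_apply, Kmat, Matrix.of_apply,
    Finset.mul_sum, starRingEnd_apply]

set_option maxHeartbeats 1000000 in
lemma dj_eq (lam : Fin n → ℝ) (F : Op n) (α β : Fin n → Fin 4) :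
    (Qmat lam α * (Fᴴ * (Qdual lam β * F))).trace
      = ∑ x, ∑ y, ((Dstr lam α x : ℝ) : ℂ) * ((Ddstr lam β y : ℝ) : ℂ)
          * (conj (Nmat F α β y x) * Nmat F α β y x) := by
  rw [← trace_diag_conj (Dstr lam α) (Ddstr lam β) (Nmat F α β)]
  rw [nq_spec lam α, nq_spec' lam β]
  simp only [Nmat, Matrix.conjTranspose_mul, Matrix.conjTranspose_conjTranspose,
    Matrix.mul_assoc]
  rw [Matrix.trace_mul_comm]
  simp only [Matrix.mul_assoc]

lemma sumNN {m : ℕ} {F : Fin m → Op n} (hsum : ∑ j, (F j)ᴴ * F j = 1)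
    (α β : Fin n → Fin 4) :
    ∑ j, ((Nmat (F j) α β)ᴴ * Nmat (F j) α β) = 1 := by
  have h1 : ∀ j, (Nmat (F j) α β)ᴴ * Nmat (F j) α β
      = (Kmat α)ᴴ * (((F j)ᴴ * F j) * Kmat α) := by
    intro j
    simp only [Nmat, Matrix.conjTranspose_mul, Matrix.conjTranspose_conjTranspose,
      Matrix.mul_assoc]
    congr 2
    rw [← Matrix.mul_assoc (Kmat β) ((Kmat β)ᴴ), nq_rows, Matrix.one_mul]
  rw [Finset.sum_congr rfl fun j _ => h1 j]
  rw [← Matrix.mul_sum, ← Matrix.sum_mul, hsum, Matrix.one_mul, nq_cols]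

lemma Nmat_vanish {S : Set (Fin n)} {F : Op n} (hF : SupportedOn S F)
    {α β : Fin n → Fin 4} (hαβ : ∀ i ∉ S, α i = β i) {i0 : Fin n} (hi0 : i0 ∉ S)
    {x y : Idx n} (hxy : x i0 ≠ y i0) :
    Nmat F α β y x = 0 := by
  rw [Nmat_apply]
  have pack : (∑ c, ∑ d, conj (Vstr β y c) * (F c d * Vstr α x d))
      = ∑ p : Idx n × Idx n, conj (Vstr β y p.1) * (F p.1 p.2 * Vstr α x p.2) :=
    (Fintype.sum_prod_type
      (f := fun p : Idx n × Idx n => conj (Vstr β y p.1) * (F p.1 p.2 * Vstr α x p.2))).symm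
  rw [pack]
  set g : Idx n × Idx n → ℂ := fun p => conj (Vstr β y p.1) * (F p.1 p.2 * Vstr α x p.2)
    with hg
  have hinv : Function.Involutive (fun p : Idx n × Idx n => (flip i0 p.1, flip i0 p.2)) := by
    intro p; simp [flip_flip]
  have hneg : ∀ p : Idx n × Idx n, g (flip i0 p.1, flip i0 p.2) = - g p := by
    rintro ⟨c, d⟩
    by_cases hcd : ∀ i ∉ S, c i = d i
    · by_cases hc0 : c i0 = d i0
      · have hFeq : F (flip i0 c) (flip i0 d) = F c d := by
          refine (hF.2 c d (flip i0 c) (flip i0 d) ?_ ?_ hcd ?_).symm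
          · intro i hiS
            rw [flip_ne _ _ (fun h => hi0 (by rw [← h]; exact hiS))]
          · intro i hiS
            rw [flip_ne _ _ (fun h => hi0 (by rw [← h]; exact hiS))]
          · intro i hiN
            by_cases h : i = i0
            · rw [h, flip_self, flip_self, hcd i0 hi0]
            · rw [flip_ne _ _ h, flip_ne _ _ h]; exact hcd i hiN
        have hb : α i0 = β i0 := hαβ i0 hi0
        have hV1 : Vstr β y (flip i0 c)
            = uW (β i0) (c i0 + 1) (y i0) * ∏ i ∈ Finset.univ.erase i0, uW (β i) (c i) (y i) :=
          prod_flip_left i0 (fun i s => uW (β i) s (y i)) c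
        have hV1' : Vstr β y c
            = uW (β i0) (c i0) (y i0) * ∏ i ∈ Finset.univ.erase i0, uW (β i) (c i) (y i) :=
          prod_left i0 (fun i s => uW (β i) s (y i)) c
        have hV2 : Vstr α x (flip i0 d)
            = uW (β i0) (c i0 + 1) (x i0) * ∏ i ∈ Finset.univ.erase i0, uW (α i) (d i) (x i) :=
          (prod_flip_left i0 (fun i s => uW (α i) s (x i)) d).trans (by rw [hb, ← hc0])
        have hV2' : Vstr α x d
            = uW (β i0) (c i0) (x i0) * ∏ i ∈ Finset.univ.erase i0, uW (α i) (d i) (x i) :=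
          (prod_left i0 (fun i s => uW (α i) s (x i)) d).trans (by rw [hb, ← hc0])
        have hcan := sq_cancelC (b := β i0) hxy (c i0)
        show conj (Vstr β y (flip i0 c)) * (F (flip i0 c) (flip i0 d) * Vstr α x (flip i0 d))
            = -(conj (Vstr β y c) * (F c d * Vstr α x d))
        rw [hFeq, hV1, hV2, hV1', hV2', _root_.map_mul, _root_.map_mul]
        linear_combination (conj (∏ i ∈ Finset.univ.erase i0, uW (β i) (c i) (y i))
          * (F c d * ∏ i ∈ Finset.univ.erase i0, uW (α i) (d i) (x i))) * hcan
      · have h1 : F c d = 0 := hF.1 c d ⟨i0, hi0, hc0⟩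
        have h2 : F (flip i0 c) (flip i0 d) = 0 := by
          refine hF.1 _ _ ⟨i0, hi0, ?_⟩
          rw [flip_self, flip_self]
          exact fun h => hc0 (by
            have := congrArg (· + 1) h
            simpa [fin2_add_one_add_one] using this)
        simp [hg, h1, h2]
    · push_neg at hcd
      obtain ⟨i, hiN, hicd⟩ := hcd
      have h1 : F c d = 0 := hF.1 c d ⟨i, hiN, hicd⟩
      have h2 : F (flip i0 c) (flip i0 d) = 0 := by
        refine hF.1 _ _ ⟨i, hiN, ?_⟩
        by_cases h : i = i0
        · subst h; rw [flip_self, flip_self]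
          exact fun h => hicd (by
            have := congrArg (· + 1) h
            simpa [fin2_add_one_add_one] using this)
        · rw [flip_ne _ _ h, flip_ne _ _ h]; exact hicd
      simp [hg, h1, h2]
  set σ : Equiv.Perm (Idx n × Idx n) := Function.Involutive.toPerm _ hinv with hσ
  have hsum := Equiv.sum_comp σ g
  have hhalf : ∑ p : Idx n × Idx n, g p = - ∑ p : Idx n × Idx n, g p := by
    calc ∑ p : Idx n × Idx n, g p = ∑ p : Idx n × Idx n, g (σ p) := hsum.symm
      _ = ∑ p : Idx n × Idx n, - g p := Finset.sum_congr rfl fun p _ => by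
            rw [hσ]; exact hneg p
      _ = - ∑ p : Idx n × Idx n, g p := by rw [Finset.sum_neg_distrib]
  have h0 : (2 : ℂ) * ∑ p : Idx n × Idx n, g p = 0 := by linear_combination hhalf
  have := mul_eq_zero.mp h0
  simpa using this

lemma Qmat_apply (lam : Fin n → ℝ) (α : Fin n → Fin 4) (a b : Idx n) :
    Qmat lam α a b = ∏ i, wauli (lam i) (α i) (a i) (b i) := rfl

lemma Qdual_apply (lam : Fin n → ℝ) (α : Fin n → Fin 4) (a b : Idx n) :
    Qdual lam α a b = ∏ i, dualWauli (lam i) (α i) (a i) (b i) := rfl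

set_option maxHeartbeats 1000000 in
lemma claimA {S : Set (Fin n)} {F : Op n} (hF : SupportedOn S F) (lam : Fin n → ℝ)
    {α β : Fin n → Fin 4} {i0 : Fin n} (hi0 : i0 ∉ S) (hab : α i0 ≠ β i0) :
    (Qmat lam α * (Fᴴ * (Qdual lam β * F))).trace = 0 := by
  set T : Idx n → Idx n → Idx n → Idx n → ℂ := fun a b c d =>
    Qmat lam α a b * (conj (F c b) * (Qdual lam β c d * F d a)) with hT
  have h4 : ∀ (T' : Idx n → Idx n → Idx n → Idx n → ℂ),
      (∑ p : (Idx n × Idx n) × Idx n × Idx n, T' p.1.1 p.1.2 p.2.1 p.2.2)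
        = ∑ a, ∑ b, ∑ c, ∑ d, T' a b c d := by
    intro T'
    calc (∑ p : (Idx n × Idx n) × Idx n × Idx n, T' p.1.1 p.1.2 p.2.1 p.2.2)
        = ∑ q : Idx n × Idx n, ∑ r : Idx n × Idx n, T' q.1 q.2 r.1 r.2 :=
          Fintype.sum_prod_type _
      _ = ∑ q : Idx n × Idx n, ∑ c, ∑ d, T' q.1 q.2 c d :=
          Finset.sum_congr rfl fun q _ => Fintype.sum_prod_type _
      _ = ∑ a, ∑ b, ∑ c, ∑ d, T' a b c d := Fintype.sum_prod_type _
  have expand : (Qmat lam α * (Fᴴ * (Qdual lam β * F))).trace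
      = ∑ p : (Idx n × Idx n) × Idx n × Idx n, T p.1.1 p.1.2 p.2.1 p.2.2 := by
    rw [h4 T, trace_mul_expand]
    refine Finset.sum_congr rfl fun a _ => Finset.sum_congr rfl fun b _ => ?_
    rw [Matrix.mul_apply, Finset.mul_sum]
    refine Finset.sum_congr rfl fun c _ => ?_
    rw [Matrix.conjTranspose_apply, Matrix.mul_apply, Finset.mul_sum, Finset.mul_sum]
    refine Finset.sum_congr rfl fun d _ => ?_
    show _ = Qmat lam α a b * ((starRingEnd ℂ) (F c b) * (Qdual lam β c d * F d a))
    rw [starRingEnd_apply]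
  rw [expand]
  have hinv : Function.Involutive (fun p : (Idx n × Idx n) × Idx n × Idx n =>
      ((flip i0 p.1.1, flip i0 p.1.2), (flip i0 p.2.1, flip i0 p.2.2))) := by
    intro p; simp [flip_flip]
  have hneg : ∀ a b c d : Idx n,
      T (flip i0 a) (flip i0 b) (flip i0 c) (flip i0 d) = - T a b c d := by
    intro a b c d
    by_cases hcb : ∀ i ∉ S, c i = b i
    · by_cases hda : ∀ i ∉ S, d i = a i
      · have hF1 : F (flip i0 c) (flip i0 b) = F c b := by
          refine (hF.2 c b (flip i0 c) (flip i0 b) ?_ ?_ hcb ?_).symm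
          · intro i hiS; rw [flip_ne _ _ (fun h => hi0 (by rw [← h]; exact hiS))]
          · intro i hiS; rw [flip_ne _ _ (fun h => hi0 (by rw [← h]; exact hiS))]
          · intro i hiN
            by_cases h : i = i0
            · rw [h, flip_self, flip_self, hcb i0 hi0]
            · rw [flip_ne _ _ h, flip_ne _ _ h]; exact hcb i hiN
        have hF2 : F (flip i0 d) (flip i0 a) = F d a := by
          refine (hF.2 d a (flip i0 d) (flip i0 a) ?_ ?_ hda ?_).symm
          · intro i hiS; rw [flip_ne _ _ (fun h => hi0 (by rw [← h]; exact hiS))]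
          · intro i hiS; rw [flip_ne _ _ (fun h => hi0 (by rw [← h]; exact hiS))]
          · intro i hiN
            by_cases h : i = i0
            · rw [h, flip_self, flip_self, hda i0 hi0]
            · rw [flip_ne _ _ h, flip_ne _ _ h]; exact hda i hiN
        have hQ : Qmat lam α (flip i0 a) (flip i0 b)
            = wauli (lam i0) (α i0) (a i0 + 1) (b i0 + 1)
              * ∏ i ∈ Finset.univ.erase i0, wauli (lam i) (α i) (a i) (b i) := by
          rw [Qmat_apply]
          exact prod_flip_split i0 (fun i => wauli (lam i) (α i)) a b
        have hQ' : Qmat lam α a b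
            = wauli (lam i0) (α i0) (a i0) (b i0)
              * ∏ i ∈ Finset.univ.erase i0, wauli (lam i) (α i) (a i) (b i) := by
          rw [Qmat_apply]
          exact prod_split i0 (fun i => wauli (lam i) (α i)) a b
        have hD : Qdual lam β (flip i0 c) (flip i0 d)
            = dualWauli (lam i0) (β i0) (b i0 + 1) (a i0 + 1)
              * ∏ i ∈ Finset.univ.erase i0, dualWauli (lam i) (β i) (c i) (d i) := by
          rw [Qdual_apply]
          refine (prod_flip_split i0 (fun i => dualWauli (lam i) (β i)) c d).trans ?_
          rw [hcb i0 hi0, hda i0 hi0]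
        have hD' : Qdual lam β c d
            = dualWauli (lam i0) (β i0) (b i0) (a i0)
              * ∏ i ∈ Finset.univ.erase i0, dualWauli (lam i) (β i) (c i) (d i) := by
          rw [Qdual_apply]
          refine (prod_split i0 (fun i => dualWauli (lam i) (β i)) c d).trans ?_
          rw [hcb i0 hi0, hda i0 hi0]
        have hcan := sq_cancelA (lam i0) hab (a i0) (b i0)
        rw [hT]
        simp only [hF1, hF2, hQ, hQ', hD, hD']
        linear_combination ((∏ i ∈ Finset.univ.erase i0, wauli (lam i) (α i) (a i) (b i))
          * (∏ i ∈ Finset.univ.erase i0, dualWauli (lam i) (β i) (c i) (d i))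
          * conj (F c b) * F d a) * hcan
      · push_neg at hda
        obtain ⟨i, hiN, hne⟩ := hda
        have h1 : F d a = 0 := hF.1 d a ⟨i, hiN, hne⟩
        have h2 : F (flip i0 d) (flip i0 a) = 0 := by
          refine hF.1 _ _ ⟨i, hiN, ?_⟩
          by_cases h : i = i0
          · rw [h, flip_self, flip_self]
            exact fun hh => (by
              have := congrArg (· + 1) hh
              simp only [fin2_add_one_add_one] at this
              exact hne (h ▸ this) : False)
          · rw [flip_ne _ _ h, flip_ne _ _ h]; exact hne
        simp [hT, h1, h2]
    · push_neg at hcb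
      obtain ⟨i, hiN, hne⟩ := hcb
      have h1 : F c b = 0 := hF.1 c b ⟨i, hiN, hne⟩
      have h2 : F (flip i0 c) (flip i0 b) = 0 := by
        refine hF.1 _ _ ⟨i, hiN, ?_⟩
        by_cases h : i = i0
        · rw [h, flip_self, flip_self]
          exact fun hh => (by
            have := congrArg (· + 1) hh
            simp only [fin2_add_one_add_one] at this
            exact hne (h ▸ this) : False)
        · rw [flip_ne _ _ h, flip_ne _ _ h]; exact hne
      simp [hT, h1, h2]
  set f : (Idx n × Idx n) × Idx n × Idx n → ℂ := fun p => T p.1.1 p.1.2 p.2.1 p.2.2 with hf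
  set σ : Equiv.Perm ((Idx n × Idx n) × Idx n × Idx n) :=
    Function.Involutive.toPerm _ hinv with hσ
  have hsum := Equiv.sum_comp σ f
  have hhalf : ∑ p, f p = - ∑ p, f p := by
    calc ∑ p, f p = ∑ p, f (σ p) := hsum.symm
      _ = ∑ p, - f p := Finset.sum_congr rfl fun p _ => by
            rw [hσ, hf]
            exact hneg p.1.1 p.1.2 p.2.1 p.2.2
      _ = - ∑ p, f p := by rw [Finset.sum_neg_distrib]
  have h0 : (2 : ℂ) * ∑ p, f p = 0 := by linear_combination hhalf
  have := mul_eq_zero.mp h0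
  simpa [hf] using this

open scoped Classical in
set_option maxHeartbeats 1000000 in
lemma claimB {S : Set (Fin n)} {m : ℕ} {F : Fin m → Op n}
    (hsupp : ∀ j, SupportedOn S (F j)) (hkr : ∑ j, (F j)ᴴ * F j = 1)
    (lam : Fin n → ℝ) (hlam : ∀ i, 0 ≤ lam i ∧ lam i < 1)
    (lmax : ℝ) (hmax : IsGreatest (Set.range lam) lmax)
    (k : ℕ) (hcardk : (Finset.univ.filter (· ∈ S)).card = k)
    {α β : Fin n → Fin 4} (hαβ : ∀ i ∉ S, α i = β i) :
    ‖∑ j, (Qmat lam α * ((F j)ᴴ * (Qdual lam β * F j))).trace‖ ≤ (1 + lmax) ^ k := by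
  have h0m : 0 ≤ lmax := by
    obtain ⟨i, hi⟩ := hmax.1
    have := (hlam i).1; linarith
  set T : Idx n → Idx n → ℝ := fun x y => ∑ j, Complex.normSq (Nmat (F j) α β y x) with hTdef
  have hTnn : ∀ x y, 0 ≤ T x y := fun x y =>
    Finset.sum_nonneg fun j _ => Complex.normSq_nonneg _
  set D : Idx n → ℝ := fun x => Dstr lam α x with hDdef
  set Dd : Idx n → ℝ := fun y => Ddstr lam β y with hDddef
  set w : Idx n → ℝ := fun x => ∏ i, (if i ∈ S then 1 else |ddWr (lam i) (α i) (x i)|)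
    with hwdef
  have hwnn : ∀ x, 0 ≤ w x := by
    intro x
    refine Finset.prod_nonneg fun i _ => ?_
    by_cases h : i ∈ S <;> simp [h, abs_nonneg]
  -- B1 : the trace sum is real
  have hB1 : ∑ j, (Qmat lam α * ((F j)ᴴ * (Qdual lam β * F j))).trace
      = ((∑ x, ∑ y, (D x * Dd y) * T x y : ℝ) : ℂ) := by
    have hreal : ∀ j, (Qmat lam α * ((F j)ᴴ * (Qdual lam β * F j))).trace
        = ((∑ x, ∑ y, (D x * Dd y) * Complex.normSq (Nmat (F j) α β y x) : ℝ) : ℂ) := by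
      intro j
      rw [dj_eq]
      push_cast
      refine Finset.sum_congr rfl fun x _ => Finset.sum_congr rfl fun y _ => ?_
      rw [mul_comm (conj _), Complex.mul_conj]
    rw [Finset.sum_congr rfl fun j _ => hreal j]
    push_cast
    rw [Finset.sum_comm]
    refine Finset.sum_congr rfl fun x _ => ?_
    rw [Finset.sum_comm]
    refine Finset.sum_congr rfl fun y _ => ?_
    rw [hTdef]
    push_cast
    rw [Finset.mul_sum]
  -- B2 : row sums of T are 1
  have hTsum : ∀ x, ∑ y, T x y = 1 := by
    intro x
    have hNN := sumNN hkr α β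
    have h1 : (∑ j, ((Nmat (F j) α β)ᴴ * Nmat (F j) α β)) x x = 1 := by
      rw [hNN]; simp [Matrix.one_apply]
    rw [Matrix.sum_apply] at h1
    have h2 : ∀ j, ((Nmat (F j) α β)ᴴ * Nmat (F j) α β) x x
        = ((∑ y, Complex.normSq (Nmat (F j) α β y x) : ℝ) : ℂ) := by
      intro j
      rw [Matrix.mul_apply]
      push_cast
      refine Finset.sum_congr rfl fun y _ => ?_
      rw [Matrix.conjTranspose_apply, mul_comm, ← starRingEnd_apply, Complex.mul_conj]
    rw [Finset.sum_congr rfl fun j _ => h2 j] at h1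
    have h3 : ((∑ j, ∑ y, Complex.normSq (Nmat (F j) α β y x) : ℝ) : ℂ) = ((1:ℝ) : ℂ) := by
      push_cast
      rw [← h1]
      norm_num
    have h4 := Complex.ofReal_injective h3
    rw [hTdef]
    rw [Finset.sum_comm]
    exact h4
  -- B3 : vanishing of T off the diagonal outside S
  have hTzero : ∀ x y, ¬ (∀ i ∉ S, x i = y i) → T x y = 0 := by
    intro x y hxy
    push_neg at hxy
    obtain ⟨i0, hi0, hne⟩ := hxy
    rw [hTdef]
    refine Finset.sum_eq_zero fun j _ => ?_
    rw [Nmat_vanish (hsupp j) hαβ hi0 hne]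
    simp
  -- B4 : weighted sum of |D| is 1
  have hB4 : ∑ x : Idx n, |D x| * w x = 1 := by
    have hx : ∀ x : Idx n, |D x| * w x
        = ∏ i, (|dWr (lam i) (α i) (x i)| * (if i ∈ S then 1 else |ddWr (lam i) (α i) (x i)|)) := by
      intro x
      rw [hDdef, hwdef]
      simp only [Dstr]
      rw [Finset.abs_prod, ← Finset.prod_mul_distrib]
    rw [Finset.sum_congr rfl fun x _ => hx x]
    have key := Finset.prod_univ_sum (fun _ : Fin n => (Finset.univ : Finset (Fin 2)))
      (fun i s => |dWr (lam i) (α i) s| * (if i ∈ S then 1 else |ddWr (lam i) (α i) s|))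
    rw [Fintype.piFinset_univ] at key
    rw [← key]
    refine Finset.prod_eq_one fun i _ => ?_
    by_cases h : i ∈ S
    · simp only [h, if_true, mul_one]
      exact sq_dW_abs (hlam i).1 (le_of_lt (hlam i).2) _
    · simp only [h, if_false]
      exact sq_dd_abs (hlam i).1 (le_of_lt (hlam i).2) _
  -- B5 : bound on |Dd y|
  have hB5 : ∀ x y : Idx n, (∀ i ∉ S, x i = y i) → |Dd y| ≤ (1 + lmax) ^ k * w x := by
    intro x y hxy
    have hsplit : |Dd y| = (∏ i ∈ Finset.univ.filter (· ∈ S), |ddWr (lam i) (β i) (y i)|)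
        * ∏ i ∈ Finset.univ.filter (fun i => ¬ i ∈ S), |ddWr (lam i) (β i) (y i)| := by
      rw [hDddef]
      simp only [Ddstr]
      rw [Finset.abs_prod, ← Finset.prod_filter_mul_prod_filter_not Finset.univ (· ∈ S)]
    have hite : ∀ i : Fin n, (if i ∈ S then (1:ℝ) else |ddWr (lam i) (α i) (x i)|)
        = if ¬ i ∈ S then |ddWr (lam i) (α i) (x i)| else 1 := by
      intro i; by_cases h : i ∈ S <;> simp [h]
    have hsecond : (∏ i ∈ Finset.univ.filter (fun i => ¬ i ∈ S), |ddWr (lam i) (β i) (y i)|)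
        = w x := by
      refine Eq.symm ?_
      show (∏ i, if i ∈ S then (1:ℝ) else |ddWr (lam i) (α i) (x i)|) = _
      rw [Finset.prod_congr rfl fun i (_ : i ∈ Finset.univ) => hite i, ← Finset.prod_filter]
      refine Finset.prod_congr rfl fun i hi => ?_
      rw [Finset.mem_filter] at hi
      rw [hαβ i hi.2, hxy i hi.2]
    have hfirst : (∏ i ∈ Finset.univ.filter (· ∈ S), |ddWr (lam i) (β i) (y i)|)
        ≤ (1 + lmax) ^ k := by
      calc (∏ i ∈ Finset.univ.filter (· ∈ S), |ddWr (lam i) (β i) (y i)|)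
          ≤ ∏ _i ∈ Finset.univ.filter (· ∈ S), (1 + lmax) := by
            refine Finset.prod_le_prod (fun i _ => abs_nonneg _) (fun i _ => ?_)
            refine (sq_dd_le (hlam i).1 (le_of_lt (hlam i).2) _ _).trans ?_
            have := hmax.2 ⟨i, rfl⟩
            linarith
        _ = (1 + lmax) ^ (Finset.univ.filter (· ∈ S)).card := Finset.prod_const _
        _ = (1 + lmax) ^ k := by rw [hcardk]
    calc |Dd y| = (∏ i ∈ Finset.univ.filter (· ∈ S), |ddWr (lam i) (β i) (y i)|) * w x := by
          rw [hsplit, hsecond]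
      _ ≤ (1 + lmax) ^ k * w x := mul_le_mul_of_nonneg_right hfirst (hwnn x)
  -- assemble
  rw [hB1, Complex.norm_real, Real.norm_eq_abs]
  calc |∑ x, ∑ y, (D x * Dd y) * T x y|
      ≤ ∑ x, ∑ y, (|D x| * |Dd y|) * T x y := by
        refine (Finset.abs_sum_le_sum_abs _ _).trans ?_
        refine Finset.sum_le_sum fun x _ => ?_
        refine (Finset.abs_sum_le_sum_abs _ _).trans ?_
        refine Finset.sum_le_sum fun y _ => ?_
        rw [abs_mul, abs_mul, abs_of_nonneg (hTnn x y)]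
    _ ≤ ∑ x, ∑ y, (|D x| * ((1 + lmax) ^ k * w x)) * T x y := by
        refine Finset.sum_le_sum fun x _ => Finset.sum_le_sum fun y _ => ?_
        by_cases hxy : ∀ i ∉ S, x i = y i
        · refine mul_le_mul_of_nonneg_right ?_ (hTnn x y)
          exact mul_le_mul_of_nonneg_left (hB5 x y hxy) (abs_nonneg _)
        · rw [hTzero x y hxy, mul_zero, mul_zero]
    _ = (1 + lmax) ^ k * ∑ x, (|D x| * w x) * ∑ y, T x y := by
        rw [Finset.mul_sum]
        refine Finset.sum_congr rfl fun x _ => ?_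
        rw [Finset.mul_sum, Finset.mul_sum]
        refine Finset.sum_congr rfl fun y _ => ?_
        ring
    _ = (1 + lmax) ^ k * ∑ x, |D x| * w x := by
        congr 1
        refine Finset.sum_congr rfl fun x _ => ?_
        rw [hTsum x, mul_one]
    _ = (1 + lmax) ^ k := by rw [hB4, mul_one]

open scoped Classical in
lemma card_agree (S : Set (Fin n)) (β : Fin n → Fin 4) :
    (Finset.univ.filter (fun α : Fin n → Fin 4 => ∀ i ∉ S, α i = β i)).card
      = 4 ^ (Finset.univ.filter (· ∈ S)).card := by
  rw [← Fintype.card_subtype]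
  have e : {α : Fin n → Fin 4 // ∀ i ∉ S, α i = β i} ≃ ({ i : Fin n // i ∈ S} → Fin 4) :=
    { toFun := fun f i => f.1 i.1
      invFun := fun g => ⟨fun i => if h : i ∈ S then g ⟨i, h⟩ else β i, fun i hi => dif_neg hi⟩
      left_inv := by
        rintro ⟨f, hf⟩
        ext i
        by_cases h : i ∈ S
        · simp [h]
        · simp [h, hf i h]
      right_inv := by
        intro g; funext i
        simp [i.2] }
  rw [Fintype.card_congr e, Fintype.card_fun, Fintype.card_fin, Fintype.card_subtype]

open scoped Classical in
set_option maxHeartbeats 1000000 in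
/-- growth of the `Q1` norm under the adjoint of a channel
acting on `k` qubits, with `λ = max_i λ_i`. -/
theorem Q1Norm_adjoint_channel_le {n : ℕ} (hn : 0 < n) (lam : Fin n → ℝ)
    (hlam : ∀ i, 0 ≤ lam i ∧ lam i < 1)
    (lmax : ℝ) (hmax : IsGreatest (Set.range lam) lmax)
    (S : Set (Fin n)) (k : ℕ) (hcard : S.ncard = k)
    (E Estar : SOp n) (hE : IsChannelOn S E) (hadj : IsHSAdjoint E Estar)
    (O : Op n) :
    Q1Norm lam (Estar O) ≤ 4 ^ k * (1 + lmax) ^ k * Q1Norm lam O ∧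
    4 ^ k * (1 + lmax) ^ k * Q1Norm lam O
      ≤ 2 ^ (3 * k) * Q1Norm lam O := by
  obtain ⟨m, F, hsupp, hkr, hKraus⟩ := hE
  have h0m : 0 ≤ lmax := by
    obtain ⟨i, hi⟩ := hmax.1
    have := (hlam i).1; linarith
  have h1m : lmax < 1 := by
    obtain ⟨i, hi⟩ := hmax.1
    have := (hlam i).2; linarith
  have hcardk : (Finset.univ.filter (· ∈ S)).card = k := by
    rw [← hcard, Set.ncard_eq_toFinset_card']
    congr 1
    ext i
    simp [Set.mem_toFinset]
  set dA : (Fin n → Fin 4) → (Fin n → Fin 4) → ℂ := fun α β =>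
    ∑ j, (Qmat lam α * ((F j)ᴴ * (Qdual lam β * F j))).trace with hdA
  -- column sums of ‖dA‖ are bounded
  have hcol : ∀ β : Fin n → Fin 4, ∑ α : Fin n → Fin 4, ‖dA α β‖
      ≤ 4 ^ k * (1 + lmax) ^ k := by
    intro β
    rw [← Finset.sum_filter_add_sum_filter_not Finset.univ
      (fun α : Fin n → Fin 4 => ∀ i ∉ S, α i = β i) (fun α => ‖dA α β‖)]
    have hz : ∑ α ∈ Finset.univ.filter
        (fun α : Fin n → Fin 4 => ¬ ∀ i ∉ S, α i = β i), ‖dA α β‖ = 0 := by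
      refine Finset.sum_eq_zero fun α hα => ?_
      rw [Finset.mem_filter] at hα
      have hα' := hα.2
      push_neg at hα'
      obtain ⟨i0, hi0, hne⟩ := hα'
      have : dA α β = 0 := by
        rw [hdA]
        exact Finset.sum_eq_zero fun j _ => claimA (hsupp j) lam hi0 hne
      rw [this, norm_zero]
    rw [hz, add_zero]
    have hbd : ∀ α ∈ Finset.univ.filter
        (fun α : Fin n → Fin 4 => ∀ i ∉ S, α i = β i), ‖dA α β‖ ≤ (1 + lmax) ^ k := by
      intro α hα
      rw [Finset.mem_filter] at hα
      exact claimB hsupp hkr lam hlam lmax hmax k hcardk hα.2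
    calc ∑ α ∈ Finset.univ.filter (fun α : Fin n → Fin 4 => ∀ i ∉ S, α i = β i), ‖dA α β‖
        ≤ (Finset.univ.filter (fun α : Fin n → Fin 4 => ∀ i ∉ S, α i = β i)).card
          • ((1 + lmax) ^ k) := Finset.sum_le_card_nsmul _ _ _ hbd
      _ = 4 ^ k * (1 + lmax) ^ k := by
          rw [card_agree S β, hcardk, nsmul_eq_mul]
          push_cast
          ring
  -- expansion of the coefficient
  have hEO : Estar O = ∑ β : Fin n → Fin 4, QCoeff lam O β
      • (∑ j, (F j)ᴴ * Qdual lam β * F j) := by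
    conv_lhs => rw [QCoeff_expand lam O]
    rw [map_sum]
    exact Finset.sum_congr rfl fun β _ => by rw [_root_.map_smul, Estar_eq hKraus hadj]
  have hcoef : ∀ α : Fin n → Fin 4, QCoeff lam (Estar O) α
      = ∑ β : Fin n → Fin 4, QCoeff lam O β * dA α β := by
    intro α
    rw [QCoeff, hEO, Matrix.mul_sum, Matrix.trace_sum]
    refine Finset.sum_congr rfl fun β _ => ?_
    rw [Matrix.mul_smul, Matrix.trace_smul, smul_eq_mul]
    congr 1
    rw [hdA, Matrix.mul_sum, Matrix.trace_sum]
    refine Finset.sum_congr rfl fun j _ => ?_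
    rw [Matrix.mul_assoc ((F j)ᴴ) (Qdual lam β) (F j)]
  have hQnn : 0 ≤ Q1Norm lam O := Finset.sum_nonneg fun β _ => norm_nonneg _
  constructor
  · calc Q1Norm lam (Estar O) = ∑ α : Fin n → Fin 4, ‖∑ β : Fin n → Fin 4,
        QCoeff lam O β * dA α β‖ := by
          refine Finset.sum_congr rfl fun α _ => ?_
          rw [hcoef α]
      _ ≤ ∑ α : Fin n → Fin 4, ∑ β : Fin n → Fin 4, ‖QCoeff lam O β‖ * ‖dA α β‖ := by
          refine Finset.sum_le_sum fun α _ => ?_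
          refine (norm_sum_le _ _).trans ?_
          refine Finset.sum_le_sum fun β _ => ?_
          rw [norm_mul]
      _ = ∑ β : Fin n → Fin 4, ‖QCoeff lam O β‖ * ∑ α : Fin n → Fin 4, ‖dA α β‖ := by
          rw [Finset.sum_comm]
          exact Finset.sum_congr rfl fun β _ => by rw [Finset.mul_sum]
      _ ≤ ∑ β : Fin n → Fin 4, ‖QCoeff lam O β‖ * (4 ^ k * (1 + lmax) ^ k) := by
          refine Finset.sum_le_sum fun β _ => ?_
          exact mul_le_mul_of_nonneg_left (hcol β) (norm_nonneg _)
      _ = 4 ^ k * (1 + lmax) ^ k * Q1Norm lam O := by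
          rw [← Finset.sum_mul, Q1Norm]
          ring
  · have hpow : (4:ℝ) ^ k * (1 + lmax) ^ k ≤ 2 ^ (3 * k) := by
      have h1 : (4:ℝ) ^ k * (1 + lmax) ^ k = (4 * (1 + lmax)) ^ k := by
        rw [mul_pow]
      have h2 : (4:ℝ) * (1 + lmax) ≤ 8 := by linarith
      have h3 : (2:ℝ) ^ (3 * k) = 8 ^ k := by
        rw [pow_mul]; norm_num
      rw [h1, h3]
      exact pow_le_pow_left₀ (by linarith) h2 k
    calc 4 ^ k * (1 + lmax) ^ k * Q1Norm lam O
        ≤ 2 ^ (3 * k) * Q1Norm lam O := mul_le_mul_of_nonneg_right hpow hQnn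

end

end SSP
end
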